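/- Let h, α, v₃ ∈ ℝ and let x, z, θ : ℝ → ℝ be functions. Define A₀(s) = −v₃(α x(s) cos θ(s) (x(s)² + h² cos²θ(s)) − x(s) z(s) θ'(s)(h² + x(s)²) − x(s)² z(s) sin θ(s) − 2h² z(s) sin θ(s) cos²θ(s)) and A₁(s) = h v₃ (x(s) θ'(s)(h² + x(s)²) + x(s)² sin θ(s) + 2h² sin θ(s) cos²θ(s)). Then for all s: h·A₀(s) − z(s)·A₁(s) = −α h v₃ x(s) cos θ(s) (x(s)² + h² cos²θ(s)). In particular, if A₀ and A₁ vanish identically, h ≠ 0, α ≠ 0, v₃ ≠ 0, and x(s)² + h² cos²θ(s) > 0 for all s, then x(s) cos θ(s) = 0 for all s. -/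
import Mathlib

open Real

/-- The key linear combination `h·A₀ − z·A₁` of the coefficients `A₀, A₁` arising in the
classification of helicoidal singular minimal surfaces equals
`−α h v₃ x cos θ (x² + h² cos²θ)`; in particular, if `A₀` and `A₁` vanish identically and
`h, α, v₃ ≠ 0` and the regularity condition holds, then `x cos θ ≡ 0`. -/
theorem helicoidal_linear_combination_A0_A1
    (h α v₃ : ℝ) (x z θ A₀ A₁ : ℝ → ℝ)
    (hA₀ : ∀ s : ℝ, A₀ s = -v₃ *
      (α * x s * Real.cos (θ s) * ((x s) ^ 2 + h ^ 2 * (Real.cos (θ s)) ^ 2)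
        - x s * z s * deriv θ s * (h ^ 2 + (x s) ^ 2)
        - (x s) ^ 2 * z s * Real.sin (θ s)
        - 2 * h ^ 2 * z s * Real.sin (θ s) * (Real.cos (θ s)) ^ 2))
    (hA₁ : ∀ s : ℝ, A₁ s = h * v₃ *
      (x s * deriv θ s * (h ^ 2 + (x s) ^ 2)
        + (x s) ^ 2 * Real.sin (θ s)
        + 2 * h ^ 2 * Real.sin (θ s) * (Real.cos (θ s)) ^ 2)) :
    (∀ s : ℝ, h * A₀ s - z s * A₁ s =
      -(α * h * v₃ * x s * Real.cos (θ s) * ((x s) ^ 2 + h ^ 2 * (Real.cos (θ s)) ^ 2))) ∧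
    ((∀ s : ℝ, A₀ s = 0) → (∀ s : ℝ, A₁ s = 0) → h ≠ 0 → α ≠ 0 → v₃ ≠ 0 →
      (∀ s : ℝ, 0 < (x s) ^ 2 + h ^ 2 * (Real.cos (θ s)) ^ 2) →
      ∀ s : ℝ, x s * Real.cos (θ s) = 0) := by
  have key : ∀ s : ℝ, h * A₀ s - z s * A₁ s =
      -(α * h * v₃ * x s * Real.cos (θ s) * ((x s) ^ 2 + h ^ 2 * (Real.cos (θ s)) ^ 2)) := by
    intro s; rw [hA₀ s, hA₁ s]; ring
  refine ⟨key, fun h0 h1 hh hα hv hreg s => ?_⟩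
  have := key s
  rw [h0 s, h1 s] at this
  simp only [mul_zero, sub_zero] at this
  have : α * h * v₃ * (x s * Real.cos (θ s)) * ((x s) ^ 2 + h ^ 2 * (Real.cos (θ s)) ^ 2) = 0 := by
    nlinarith [this]
  have hr := (hreg s).ne'
  have hαhv : α * h * v₃ ≠ 0 := by positivity
  rcases mul_eq_zero.1 this with h' | h'
  · rcases mul_eq_zero.1 h' with h'' | h''
    · exact absurd h'' hαhv
    · exact h''
  · exact absurd h' hr
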